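/- Let 𝔸 be a complex Banach algebra with unit, let n : ℕ, let r : Fin n → 𝔸, let a ∈ 𝔸, and let M be an n×n complex matrix such that for every i, a * (r i) − (r i) * a = ∑_j M i j • r j. Then for every i, exp(a) * (r i) * exp(−a) = ∑_j (exp M) i j • r j, where exp M is the matrix exponential. (If the adjoint action of a preserves the span of the r i and acts there by the matrix M, then conjugation by exp(a) acts by exp(M).) -/

import Mathlib

open NormedSpace
open scoped Nat

section Aux

variable {𝔸 : Type*} [NormedRing 𝔸] [NormedAlgebra ℂ 𝔸] [CompleteSpace 𝔸]

/-- Left multiplication as a ring hom into continuous linear endomorphisms. -/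
noncomputable def lmulRH (𝔸 : Type*) [NormedRing 𝔸] [NormedAlgebra ℂ 𝔸] :
    𝔸 →+* (𝔸 →L[ℂ] 𝔸) where
  toFun a := ContinuousLinearMap.mul ℂ 𝔸 a
  map_one' := by ext x; simp
  map_mul' a b := by ext x; simp [mul_assoc]
  map_zero' := by ext x; simp
  map_add' a b := by ext x; simp [add_mul]

/-- Right multiplication as a ring hom from the opposite algebra. -/
noncomputable def rmulRH (𝔸 : Type*) [NormedRing 𝔸] [NormedAlgebra ℂ 𝔸] :
    𝔸ᵐᵒᵖ →+* (𝔸 →L[ℂ] 𝔸) where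
  toFun a := (ContinuousLinearMap.mul ℂ 𝔸).flip a.unop
  map_one' := by ext x; simp
  map_mul' a b := by ext x; simp [mul_assoc]
  map_zero' := by ext x; simp
  map_add' a b := by ext x; simp [mul_add]

lemma lmulRH_continuous : Continuous (lmulRH 𝔸) :=
  (ContinuousLinearMap.mul ℂ 𝔸).continuous

lemma rmulRH_continuous : Continuous (rmulRH 𝔸) :=
  ((ContinuousLinearMap.mul ℂ 𝔸).flip.continuous).comp MulOpposite.continuous_unop

lemma exp_lmul (a : 𝔸) : exp (lmulRH 𝔸 a) = lmulRH 𝔸 (exp a) :=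
  by
  letI : NormedAlgebra ℚ 𝔸 := .restrictScalars ℚ ℂ 𝔸
  letI : NormedAlgebra ℚ (𝔸 →L[ℂ] 𝔸) := .restrictScalars ℚ ℂ (𝔸 →L[ℂ] 𝔸)
  exact (map_exp (lmulRH 𝔸) lmulRH_continuous a).symm

lemma exp_rmul (a : 𝔸) :
    exp (rmulRH 𝔸 (MulOpposite.op a)) = rmulRH 𝔸 (MulOpposite.op (exp a)) := by
  letI : NormedAlgebra ℚ 𝔸 := .restrictScalars ℚ ℂ 𝔸
  letI : NormedAlgebra ℚ 𝔸ᵐᵒᵖ := .restrictScalars ℚ ℂ 𝔸ᵐᵒᵖ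
  letI : NormedAlgebra ℚ (𝔸 →L[ℂ] 𝔸) := .restrictScalars ℚ ℂ (𝔸 →L[ℂ] 𝔸)
  rw [← exp_op, map_exp (rmulRH 𝔸) rmulRH_continuous]

/-- Conjugation by `exp a` is `exp` of the commutator operator. -/
lemma exp_conj_eq (a x : 𝔸) :
    exp a * x * exp (-a) =
      exp (lmulRH 𝔸 a - rmulRH 𝔸 (MulOpposite.op a)) x := by
  have hc0 : Commute (lmulRH 𝔸 a) (rmulRH 𝔸 (MulOpposite.op a)) := by
    ext y
    simp [lmulRH, rmulRH, mul_assoc]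
  have hc : Commute (lmulRH 𝔸 a) (-(rmulRH 𝔸 (MulOpposite.op a))) := hc0.neg_right
  have : lmulRH 𝔸 a - rmulRH 𝔸 (MulOpposite.op a) =
      lmulRH 𝔸 a + -(rmulRH 𝔸 (MulOpposite.op a)) := sub_eq_add_neg _ _
  letI instQ : NormedAlgebra ℚ (𝔸 →L[ℂ] 𝔸) := .restrictScalars ℚ ℂ (𝔸 →L[ℂ] 𝔸)
  rw [this, exp_add_of_commute hc]
  have hneg : -(rmulRH 𝔸 (MulOpposite.op a)) = rmulRH 𝔸 (MulOpposite.op (-a)) := by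
    simp
  rw [hneg, exp_lmul, exp_rmul]
  simp [lmulRH, rmulRH, mul_assoc]

end Aux

/-- If `ad a` acts on the span of the `r i` by the matrix `M`, then conjugation by
`exp a` acts by the matrix exponential `exp M`. -/
theorem stmt_4 {𝔸 : Type*} [NormedRing 𝔸] [NormedAlgebra ℂ 𝔸] [CompleteSpace 𝔸]
    (n : ℕ) (r : Fin n → 𝔸) (a : 𝔸) (M : Matrix (Fin n) (Fin n) ℂ)
    (h : ∀ i, a * r i - r i * a = ∑ j, M i j • r j) :
    ∀ i, NormedSpace.exp a * r i * NormedSpace.exp (-a) =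
      ∑ j, (NormedSpace.exp M) i j • r j := by
  intro i
  set T : 𝔸 →L[ℂ] 𝔸 := lmulRH 𝔸 a - rmulRH 𝔸 (MulOpposite.op a) with hT
  -- T applied to r i
  have hTr : ∀ i, T (r i) = ∑ j, M i j • r j := by
    intro i
    simpa [hT, lmulRH, rmulRH] using h i
  -- powers
  have hTk : ∀ (k : ℕ) (i : Fin n), (T ^ k) (r i) = ∑ j, (M ^ k) i j • r j := by
    intro k
    induction k with
    | zero => intro i; simp [Matrix.one_apply, ite_smul]
    | succ k ih =>
      intro i
      have h1 : (T ^ (k + 1)) (r i) = T ((T ^ k) (r i)) := by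
        rw [pow_succ']; rfl
      rw [h1, ih i, map_sum]
      have h2 : ∀ j, T ((M ^ k) i j • r j) = (M ^ k) i j • ∑ l, M j l • r l := by
        intro j; rw [map_smul, hTr j]
      simp_rw [h2, Finset.smul_sum, smul_smul]
      rw [Finset.sum_comm]
      refine Finset.sum_congr rfl fun l _ => ?_
      rw [← Finset.sum_smul, ← Matrix.mul_apply, ← pow_succ]
  -- summability of the matrix exponential series (using the L∞ operator norm)
  letI : SeminormedRing (Matrix (Fin n) (Fin n) ℂ) := Matrix.linftyOpSemiNormedRing
  letI : NormedRing (Matrix (Fin n) (Fin n) ℂ) := Matrix.linftyOpNormedRing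
  letI : NormedAlgebra ℂ (Matrix (Fin n) (Fin n) ℂ) := Matrix.linftyOpNormedAlgebra
  have hMsum : Summable fun k : ℕ => (k !⁻¹ : ℂ) • M ^ k :=
    NormedSpace.expSeries_summable' (𝕂 := ℂ) M
  have hMsum_entry : ∀ i j, Summable fun k : ℕ => ((k !⁻¹ : ℂ) • M ^ k) i j := by
    intro i j
    have h1 : Summable fun k : ℕ => ((k !⁻¹ : ℂ) • M ^ k) i :=
      hMsum.map (Pi.evalAddMonoidHom _ i) (continuous_apply i)
    exact h1.map (Pi.evalAddMonoidHom _ j) (continuous_apply j)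
  -- entries of exp M
  have hexp_entry : ∀ i j, (exp M) i j = ∑' k : ℕ, ((k !⁻¹ : ℂ) • M ^ k) i j := by
    intro i j
    have h0 : exp M = ∑' k : ℕ, (k !⁻¹ : ℂ) • M ^ k :=
      congrFun (NormedSpace.exp_eq_tsum ℂ) M
    have hrow : Summable fun k : ℕ => ((k !⁻¹ : ℂ) • M ^ k) i := by
      exact hMsum.map (Pi.evalAddMonoidHom _ i) (continuous_apply i)
    rw [h0]
    exact ((hMsum.hasSum.map (Pi.evalAddMonoidHom _ i) (continuous_apply i)).map
      (Pi.evalAddMonoidHom _ j) (continuous_apply j)).tsum_eq.symm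
  -- the left side via exp of T
  have hTsum : Summable fun k : ℕ => (k !⁻¹ : ℂ) • T ^ k :=
    NormedSpace.expSeries_summable' (𝕂 := ℂ) T
  have hL : exp a * r i * exp (-a) = ∑' k : ℕ, (k !⁻¹ : ℂ) • (T ^ k) (r i) := by
    have h0 : exp T = ∑' k : ℕ, (k !⁻¹ : ℂ) • T ^ k :=
      congrFun (NormedSpace.exp_eq_tsum ℂ) T
    rw [exp_conj_eq, ← hT, h0]
    simpa using (ContinuousLinearMap.apply ℂ 𝔸 (r i)).map_tsum hTsum
  rw [hL]
  -- the right side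
  have hR : ∑ j, (exp M) i j • r j = ∑' k : ℕ, (k !⁻¹ : ℂ) • (T ^ k) (r i) := by
    have : ∀ j, (exp M) i j • r j = ∑' k : ℕ, (((k !⁻¹ : ℂ) • M ^ k) i j) • r j := by
      intro j
      rw [hexp_entry i j, Summable.tsum_smul_const (hMsum_entry i j)]
    simp_rw [this]
    rw [← Summable.tsum_finsetSum fun j _ => ((hMsum_entry i j).smul_const (r j))]
    refine tsum_congr fun k => ?_
    rw [hTk k i, Finset.smul_sum]
    refine Finset.sum_congr rfl fun j _ => ?_
    simp [smul_smul]
  rw [hR]
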